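/- Let p(n) denote the number of partitions of n. For every complex number x with |x| < 1, the series ∑_{n=0}^∞ p(n) x^n converges and (∑_{n=0}^∞ p(n) x^n) · ∏_{m=1}^∞ (1 − x^m) = 1; equivalently ∑_{n=0}^∞ p(n) x^n = ∏_{m=1}^∞ 1/(1 − x^m) (Euler's generating function for the partition function). -/

import Mathlib

open PowerSeries

namespace EulerPGFAux

noncomputable section

variable {α : Type*}

open Finset

open scoped Classical

/-- The partial product for the generating function for odd partitions.
TODO: As `m` tends to infinity, this converges (in the `X`-adic topology).

If `m` is sufficiently large, the `i`th coefficient gives the number of odd partitions of the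
natural number `i`: proved in `oddGF_prop`.
It is stated for an arbitrary field `α`, though it usually suffices to use `ℚ` or `ℝ`.
-/
def partialOddGF (m : ℕ) [Field α] :=
  ∏ i ∈ range m, (1 - (X : PowerSeries α) ^ (2 * i + 1))⁻¹

/-- The partial product for the generating function for distinct partitions.
TODO: As `m` tends to infinity, this converges (in the `X`-adic topology).

If `m` is sufficiently large, the `i`th coefficient gives the number of distinct partitions of the
natural number `i`: proved in `distinctGF_prop`.
It is stated for an arbitrary commutative semiring `α`, though it usually suffices to use `ℕ`, `ℚ`
or `ℝ`.
-/
def partialDistinctGF (m : ℕ) [CommSemiring α] :=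
  ∏ i ∈ range m, (1 + (X : PowerSeries α) ^ (i + 1))

open Finset.HasAntidiagonal

universe u
variable {ι : Type u}

/-- A convenience constructor for the power series whose coefficients indicate a subset. -/
def indicatorSeries (α : Type*) [Semiring α] (s : Set ℕ) : PowerSeries α :=
  PowerSeries.mk fun n => if n ∈ s then 1 else 0

theorem coeff_indicator (s : Set ℕ) [Semiring α] (n : ℕ) :
    coeff n (indicatorSeries α s) = if n ∈ s then 1 else 0 :=
  coeff_mk _ _

theorem coeff_indicator_pos (s : Set ℕ) [Semiring α] (n : ℕ) (h : n ∈ s) :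
    coeff n (indicatorSeries α s) = 1 := by rw [coeff_indicator, if_pos h]

theorem coeff_indicator_neg (s : Set ℕ) [Semiring α] (n : ℕ) (h : n ∉ s) :
    coeff n (indicatorSeries α s) = 0 := by rw [coeff_indicator, if_neg h]

theorem constantCoeff_indicator (s : Set ℕ) [Semiring α] :
    constantCoeff (indicatorSeries α s) = if 0 ∈ s then 1 else 0 :=
  rfl

theorem two_series (i : ℕ) [Semiring α] :
    1 + (X : PowerSeries α) ^ i.succ = indicatorSeries α {0, i.succ} := by
  ext n
  simp only [coeff_indicator, coeff_one, coeff_X_pow, Set.mem_insert_iff, Set.mem_singleton_iff,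
    map_add]
  cases' n with d
  · simp [(Nat.succ_ne_zero i).symm]
  · simp [Nat.succ_ne_zero d]

theorem num_series' [Field α] (i : ℕ) :
    (1 - (X : PowerSeries α) ^ (i + 1))⁻¹ = indicatorSeries α {k | i + 1 ∣ k} := by
  rw [PowerSeries.inv_eq_iff_mul_eq_one]
  · ext n
    cases n with
    | zero => simp [mul_sub, zero_pow, constantCoeff_indicator]
    | succ n =>
      simp only [coeff_one, if_false, mul_sub, mul_one, coeff_indicator,
        LinearMap.map_sub, reduceCtorEq]
      simp_rw [coeff_mul, coeff_X_pow, coeff_indicator, @boole_mul _ _ _ _]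
      erw [@sum_ite _ _ _ _ _ (fun _ => Classical.propDecidable _), sum_ite]
      simp_rw [@filter_filter _ _ _ _ _, sum_const_zero, add_zero, sum_const, nsmul_eq_mul, mul_one,
        sub_eq_iff_eq_add, zero_add]
      symm
      split_ifs with h
      · suffices #{a ∈ antidiagonal (n + 1) | i + 1 ∣ a.fst ∧ a.snd = i + 1} = 1 by
          simp only [Set.mem_setOf_eq]; convert congr_arg ((↑) : ℕ → α) this; norm_cast
        rw [card_eq_one]
        cases' h with p hp
        refine ⟨((i + 1) * (p - 1), i + 1), ?_⟩
        ext ⟨a₁, a₂⟩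
        simp only [mem_filter, Prod.mk.injEq, HasAntidiagonal.mem_antidiagonal, mem_singleton]
        constructor
        · rintro ⟨a_left, ⟨a, rfl⟩, rfl⟩
          refine ⟨?_, rfl⟩
          rw [Nat.mul_sub_left_distrib, ← hp, ← a_left, mul_one, Nat.add_sub_cancel]
        · rintro ⟨rfl, rfl⟩
          match p with
          | 0 => rw [mul_zero] at hp; cases hp
          | p + 1 => rw [hp]; simp [mul_add]
      · suffices #{a ∈ antidiagonal (n + 1) | i + 1 ∣ a.fst ∧ a.snd = i + 1} = 0 by
          simp only [Set.mem_setOf_eq]; convert congr_arg ((↑) : ℕ → α) this; norm_cast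
        rw [card_eq_zero]
        apply eq_empty_of_forall_notMem
        simp only [Prod.forall, mem_filter, not_and, HasAntidiagonal.mem_antidiagonal]
        rintro _ h₁ h₂ ⟨a, rfl⟩ rfl
        apply h
        simp [← h₂]
  · simp [zero_pow]

def mkOdd : ℕ ↪ ℕ :=
  ⟨fun i => 2 * i + 1, fun x y h => by linarith⟩

-- The main workhorse of the partition theorem proof.
theorem partialGF_prop (α : Type*) [CommSemiring α] (n : ℕ) (s : Finset ℕ) (hs : ∀ i ∈ s, 0 < i)
    (c : ℕ → Set ℕ) (hc : ∀ i, i ∉ s → 0 ∈ c i) :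
    #{p : n.Partition | (∀ j, p.parts.count j ∈ c j) ∧ ∀ j ∈ p.parts, j ∈ s} =
      coeff n (∏ i ∈ s, indicatorSeries α ((· * i) '' c i)) := by
  simp_rw [coeff_prod, coeff_indicator, prod_boole, sum_boole]
  apply congr_arg
  simp only [mem_univ, forall_true_left, not_and, not_forall, exists_prop,
    Set.mem_image, not_exists]
  set φ : (a : Nat.Partition n) →
    a ∈ filter (fun p ↦ (∀ (j : ℕ), Multiset.count j p.parts ∈ c j) ∧ ∀ j ∈ p.parts, j ∈ s) univ →
    ℕ →₀ ℕ := fun p _ => {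
      toFun := fun i => Multiset.count i p.parts • i
      support := Finset.filter (fun i => i ≠ 0) p.parts.toFinset
      mem_support_toFun := fun a => by
        simp only [smul_eq_mul, ne_eq, mul_eq_zero, Multiset.count_eq_zero]
        rw [not_or, not_not]
        simp only [Multiset.mem_toFinset, not_not, mem_filter] }
  refine Finset.card_bij φ ?_ ?_ ?_
  · intro a ha
    simp only [φ, not_forall, not_exists, not_and, exists_prop, mem_filter]
    rw [mem_finsuppAntidiag]
    dsimp only [ne_eq, smul_eq_mul, id_eq, eq_mpr_eq_cast, le_eq_subset, Finsupp.coe_mk]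
    simp only [mem_univ, forall_true_left, not_and, not_forall, exists_prop,
      mem_filter, true_and] at ha
    refine ⟨⟨?_, fun i ↦ ?_⟩, fun i _ ↦ ⟨a.parts.count i, ha.1 i, rfl⟩⟩
    · conv_rhs => simp [← a.parts_sum]
      rw [sum_multiset_count_of_subset _ s]
      · simp only [smul_eq_mul]
      · intro i
        simp only [Multiset.mem_toFinset, not_not, mem_filter]
        apply ha.2
    · simp only [ne_eq, Multiset.mem_toFinset, not_not, mem_filter, and_imp]
      exact fun hi _ ↦ ha.2 i hi
  · intro p₁ hp₁ p₂ hp₂ h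
    apply Nat.Partition.ext
    simp only [true_and, mem_univ, mem_filter] at hp₁ hp₂
    ext i
    simp only [φ, ne_eq, Multiset.mem_toFinset, not_not, smul_eq_mul, Finsupp.mk.injEq] at h
    by_cases hi : i = 0
    · rw [hi]
      rw [Multiset.count_eq_zero_of_notMem]
      · rw [Multiset.count_eq_zero_of_notMem]
        intro a; exact Nat.lt_irrefl 0 (hs 0 (hp₂.2 0 a))
      intro a; exact Nat.lt_irrefl 0 (hs 0 (hp₁.2 0 a))
    · rw [← mul_left_inj' hi]
      rw [funext_iff] at h
      exact h.2 i
  · simp only [φ, mem_filter, mem_finsuppAntidiag, mem_univ, exists_prop, true_and, and_assoc]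
    rintro f ⟨hf, hf₃, hf₄⟩
    have hf' : f ∈ finsuppAntidiag s n := mem_finsuppAntidiag.mpr ⟨hf, hf₃⟩
    simp only [mem_finsuppAntidiag] at hf'
    refine ⟨⟨∑ i ∈ s, Multiset.replicate (f i / i) i, ?_, ?_⟩, ?_, ?_, ?_⟩
    · intro i hi
      simp only [exists_prop, Multiset.mem_sum, mem_map, Function.Embedding.coeFn_mk] at hi
      rcases hi with ⟨t, ht, z⟩
      apply hs
      rwa [Multiset.eq_of_mem_replicate z]
    · simp_rw [Multiset.sum_sum, Multiset.sum_replicate, Nat.nsmul_eq_mul]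
      rw [← hf'.1]
      refine sum_congr rfl fun i hi => Nat.div_mul_cancel ?_
      rcases hf₄ i hi with ⟨w, _, hw₂⟩
      rw [← hw₂]
      exact dvd_mul_left _ _
    · intro i
      simp_rw [Multiset.count_sum', Multiset.count_replicate, sum_ite_eq']
      split_ifs with h
      · rcases hf₄ i h with ⟨w, hw₁, hw₂⟩
        rwa [← hw₂, Nat.mul_div_cancel _ (hs i h)]
      · exact hc _ h
    · intro i hi
      rw [Multiset.mem_sum] at hi
      rcases hi with ⟨j, hj₁, hj₂⟩
      rwa [Multiset.eq_of_mem_replicate hj₂]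
    · ext i
      simp_rw [Multiset.count_sum', Multiset.count_replicate, sum_ite_eq']
      simp only [ne_eq, Multiset.mem_toFinset, not_not, smul_eq_mul, ite_mul,
        zero_mul, Finsupp.coe_mk]
      split_ifs with h
      · apply Nat.div_mul_cancel
        rcases hf₄ i h with ⟨w, _, hw₂⟩
        apply Dvd.intro_left _ hw₂
      · apply symm
        rw [← Finsupp.notMem_support_iff]
        exact notMem_mono hf'.2 h


/-- embedding `i ↦ i+1` -/
def succEmb : ℕ ↪ ℕ := ⟨Nat.succ, Nat.succ_injective⟩

/-- number of partitions of `n` with all parts at most `N` (parts in `{1,...,N}`). -/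
def qq (N n : ℕ) : ℕ :=
  #{p : n.Partition | ∀ j ∈ p.parts, j ∈ (range N).map succEmb}

theorem qq_coeff (N n : ℕ) :
    (qq N n : ℂ) = coeff n (∏ i ∈ range N, (1 - (X : PowerSeries ℂ) ^ (i + 1))⁻¹) := by
  rw [qq]
  convert partialGF_prop ℂ n ((range N).map succEmb) _ (fun _ => Set.univ)
    (fun _ _ => trivial) using 2
  · rfl
  · congr
    simp only [true_and, forall_const, Set.mem_univ]
  · rw [Finset.prod_map]
    simp_rw [num_series']
    refine Finset.prod_congr rfl fun i _ => ?_
    have hset : ((fun x => x * succEmb i) '' Set.univ) = {k | i + 1 ∣ k} := by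
      ext k
      simp only [Set.image_univ, Set.mem_range, Set.mem_setOf_eq, succEmb,
        Function.Embedding.coeFn_mk, Nat.succ_eq_add_one]
      constructor
      · rintro ⟨c, rfl⟩; exact Dvd.intro_left c rfl
      · rintro ⟨c, rfl⟩; exact ⟨c, mul_comm _ _⟩
    rw [hset]
  · intro i hi
    simp only [mem_map, mem_range, succEmb, Function.Embedding.coeFn_mk] at hi
    obtain ⟨a, -, rfl⟩ := hi
    exact Nat.succ_pos a

theorem qq_eq (N n : ℕ) (h : n ≤ N) : qq N n = Fintype.card (Nat.Partition n) := by
  rw [qq, ← Finset.card_univ]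
  congr 1
  rw [Finset.filter_true_of_mem]
  intro p _ j hj
  simp only [mem_map, mem_range, succEmb, Function.Embedding.coeFn_mk]
  have h1 : 0 < j := p.parts_pos hj
  have h2 : j ≤ n := by
    have := Multiset.single_le_sum (fun x _ => Nat.zero_le x) j hj
    rwa [p.parts_sum] at this
  exact ⟨j - 1, by omega, by omega⟩

theorem qq_le (N n : ℕ) : qq N n ≤ Fintype.card (Nat.Partition n) := by
  rw [qq, ← Finset.card_univ]
  exact Finset.card_filter_le _ _

/-- The coefficient recurrence. -/
theorem qq_rec (N n : ℕ) :
    (qq (N + 1) n : ℂ) =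
      ∑ kl ∈ antidiagonal n, (qq N kl.1 : ℂ) * (if (N + 1) ∣ kl.2 then 1 else 0) := by
  rw [qq_coeff, Finset.prod_range_succ, PowerSeries.coeff_mul]
  refine Finset.sum_congr rfl fun kl _ => ?_
  rw [← qq_coeff, num_series', coeff_indicator]
  by_cases h : (N + 1) ∣ kl.2 <;> simp [h]



section Analysis

theorem geom_aux {x : ℂ} (hx : ‖x‖ < 1) (N : ℕ) :
    Summable (fun j : ℕ => ‖(if (N+1:ℕ) ∣ j then (1:ℂ) else 0) * x ^ j‖) ∧
    ∑' j : ℕ, (if (N+1:ℕ) ∣ j then (1:ℂ) else 0) * x ^ j = (1 - x ^ (N+1))⁻¹ := by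
  constructor
  · refine Summable.of_nonneg_of_le (fun j => norm_nonneg _) (fun j => ?_)
      (summable_geometric_of_lt_one (norm_nonneg x) hx)
    rw [norm_mul, norm_pow]
    split_ifs <;> simp
  · have hinj : Function.Injective (fun k : ℕ => (N+1)*k) := fun a b h => by
      simpa [Nat.succ_ne_zero] using h
    rw [← Function.Injective.tsum_eq hinj ?_]
    · have : ∀ k : ℕ, (if (N+1:ℕ) ∣ (N+1)*k then (1:ℂ) else 0) * x ^ ((N+1)*k)
          = (x ^ (N+1)) ^ k := fun k => by
        rw [if_pos (Dvd.intro k rfl), one_mul, pow_mul]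
      rw [tsum_congr this]
      exact tsum_geometric_of_norm_lt_one (by
        rw [norm_pow]; exact pow_lt_one₀ (norm_nonneg x) hx (Nat.succ_ne_zero N))
    · intro j hj
      rw [Function.mem_support] at hj
      by_contra hne
      apply hj
      rw [if_neg, zero_mul]
      intro ⟨c, hc⟩
      exact hne ⟨c, hc.symm⟩
end Analysis

theorem qq_zero (n : ℕ) (hn : n ≠ 0) : qq 0 n = 0 := by
  rw [qq, Finset.card_eq_zero]
  rw [Finset.filter_eq_empty_iff]
  intro p _
  simp only [Finset.range_zero, Finset.map_empty, Finset.notMem_empty]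
  push_neg
  have : p.parts ≠ 0 := by
    intro h
    apply hn
    rw [← p.parts_sum, h, Multiset.sum_zero]
  obtain ⟨j, hj⟩ := Multiset.exists_mem_of_ne_zero this
  exact ⟨j, hj, trivial⟩

theorem qq_zero_zero : qq 0 0 = 1 := by
  rw [qq_eq 0 0 le_rfl]
  simp [Fintype.card_unique]

theorem partial_sum_prod {x : ℂ} (hx : ‖x‖ < 1) (N : ℕ) :
    Summable (fun n : ℕ => ‖(qq N n : ℂ) * x ^ n‖) ∧
    ∑' n : ℕ, (qq N n : ℂ) * x ^ n = ∏ i ∈ range N, (1 - x ^ (i+1))⁻¹ := by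
  induction N with
  | zero =>
    have h0 : ∀ n : ℕ, n ∉ ({0} : Finset ℕ) → (qq 0 n : ℂ) * x ^ n = 0 := by
      intro n hn
      rw [Finset.mem_singleton] at hn
      rw [qq_zero n hn]
      simp
    constructor
    · apply summable_of_ne_finset_zero (s := {0})
      intro n hn
      rw [h0 n hn, norm_zero]
    · rw [tsum_eq_sum h0]
      simp [qq_zero_zero]
  | succ N ih =>
    have key : ∀ n : ℕ, ∑ kl ∈ antidiagonal n,
        ((qq N kl.1 : ℂ) * x ^ kl.1) * ((if (N+1:ℕ) ∣ kl.2 then (1:ℂ) else 0) * x ^ kl.2)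
        = (qq (N+1) n : ℂ) * x ^ n := by
      intro n
      rw [qq_rec, Finset.sum_mul]
      refine Finset.sum_congr rfl fun kl hkl => ?_
      rw [Finset.HasAntidiagonal.mem_antidiagonal] at hkl
      rw [← hkl, pow_add]
      ring
    have hsum : Summable (fun n : ℕ => ‖(qq (N+1) n : ℂ) * x ^ n‖) := by
      have := summable_norm_sum_mul_antidiagonal_of_summable_norm ih.1 (geom_aux hx N).1
      simpa only [key] using this
    refine ⟨hsum, ?_⟩
    have := tsum_mul_tsum_eq_tsum_sum_antidiagonal_of_summable_norm ih.1 (geom_aux hx N).1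
    simp_rw [key] at this
    rw [← this, ih.2, (geom_aux hx N).2, Finset.prod_range_succ]

theorem real_version {r : ℝ} (hr0 : 0 ≤ r) (hr : r < 1) (N : ℕ) :
    Summable (fun n : ℕ => (qq N n : ℝ) * r ^ n) ∧
    ∑' n : ℕ, (qq N n : ℝ) * r ^ n = ∏ i ∈ range N, (1 - r ^ (i+1))⁻¹ := by
  have hxr : ‖(r : ℂ)‖ < 1 := by
    rw [Complex.norm_real, Real.norm_of_nonneg hr0]; exact hr
  obtain ⟨h1, h2⟩ := partial_sum_prod hxr N
  have hfun : (fun n : ℕ => ‖(qq N n : ℂ) * (r:ℂ) ^ n‖) = fun n => (qq N n : ℝ) * r ^ n := by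
    funext n
    rw [norm_mul, norm_pow, Complex.norm_natCast, Complex.norm_real,
      Real.norm_of_nonneg hr0]
  rw [hfun] at h1
  refine ⟨h1, ?_⟩
  have h3 : ((∑' n : ℕ, (qq N n : ℝ) * r ^ n : ℝ) : ℂ) = ∑' n : ℕ, (qq N n : ℂ) * (r:ℂ) ^ n := by
    have h3' := Complex.ofRealCLM.map_tsum h1
    simp only [Complex.ofRealCLM_apply] at h3'
    rw [h3']
    exact tsum_congr fun n => by push_cast; ring
  apply Complex.ofReal_injective
  rw [h3, h2]
  push_cast
  rfl

theorem prod_bound {r : ℝ} (hr0 : 0 ≤ r) (hr : r < 1) (N : ℕ) :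
    ∏ i ∈ range N, (1 - r ^ (i+1))⁻¹ ≤ Real.exp (r / (1-r)^2) := by
  have hrpos : (0:ℝ) < 1 - r := by linarith
  have hplt : ∀ i : ℕ, r ^ (i+1) ≤ r := fun i =>
    calc r ^ (i+1) ≤ r ^ 1 := pow_le_pow_of_le_one hr0 hr.le (by omega)
    _ = r := pow_one r
  have hple : ∀ i : ℕ, 0 < 1 - r ^ (i+1) := fun i => by
    have := hplt i; linarith
  calc ∏ i ∈ range N, (1 - r ^ (i+1))⁻¹
      ≤ ∏ i ∈ range N, Real.exp (r ^ (i+1) / (1-r)) := by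
        refine Finset.prod_le_prod (fun i _ => le_of_lt (inv_pos.2 (hple i))) (fun i _ => ?_)
        have hne := (hple i).ne'
        have h1 : (1 - r ^ (i+1))⁻¹ = 1 + r ^ (i+1) / (1 - r ^ (i+1)) := by
          field_simp
          ring
        rw [h1]
        have h2 : r ^ (i+1) / (1 - r ^ (i+1)) ≤ r ^ (i+1) / (1 - r) := by
          apply div_le_div_of_nonneg_left (by positivity) hrpos
          linarith [hplt i]
        have h3 := Real.add_one_le_exp (r ^ (i+1) / (1-r))
        linarith
    _ = Real.exp (∑ i ∈ range N, r ^ (i+1) / (1-r)) := (Real.exp_sum _ _).symm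
    _ ≤ Real.exp (r / (1-r)^2) := by
        apply Real.exp_le_exp.2
        rw [← Finset.sum_div]
        rw [div_le_div_iff₀ hrpos (by positivity)]
        have h4 : ∑ i ∈ range N, r ^ (i+1) = r * ∑ i ∈ range N, r ^ i := by
          rw [Finset.mul_sum]
          exact Finset.sum_congr rfl fun i _ => by ring
        have h5 : ∑ i ∈ range N, r ^ i ≤ (1 - r)⁻¹ := by
          rw [← tsum_geometric_of_lt_one hr0 hr]
          exact Summable.sum_le_tsum _ (fun i _ => by positivity)
            (summable_geometric_of_lt_one hr0 hr)
        have h6 : 0 ≤ ∑ i ∈ range N, r ^ i :=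
          Finset.sum_nonneg fun i _ => by positivity
        calc (∑ i ∈ range N, r ^ (i+1)) * (1-r)^2
            = (r * ∑ i ∈ range N, r ^ i) * (1-r)^2 := by rw [h4]
          _ ≤ (r * (1-r)⁻¹) * (1-r)^2 := by
              apply mul_le_mul_of_nonneg_right _ (by positivity)
              exact mul_le_mul_of_nonneg_left h5 hr0
          _ = r * (1-r) := by field_simp

theorem summable_p {r : ℝ} (hr0 : 0 ≤ r) (hr : r < 1) :
    Summable (fun n : ℕ => (Fintype.card (Nat.Partition n) : ℝ) * r ^ n) := by
  apply summable_of_sum_range_le (c := Real.exp (r / (1-r)^2))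
    (fun n => by positivity)
  intro M
  calc ∑ n ∈ range M, (Fintype.card (Nat.Partition n) : ℝ) * r ^ n
      = ∑ n ∈ range M, (qq M n : ℝ) * r ^ n := by
        refine Finset.sum_congr rfl fun n hn => ?_
        rw [Finset.mem_range] at hn
        rw [qq_eq M n hn.le]
    _ ≤ ∑' n : ℕ, (qq M n : ℝ) * r ^ n :=
        Summable.sum_le_tsum _ (fun n _ => by positivity) (real_version hr0 hr M).1
    _ = ∏ i ∈ range M, (1 - r ^ (i+1))⁻¹ := (real_version hr0 hr M).2
    _ ≤ Real.exp (r / (1-r)^2) := prod_bound hr0 hr M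

end
end EulerPGFAux

open EulerPGFAux Finset Filter

/-- Euler's generating function for the partition function: for `‖x‖ < 1`,
`∑_{n=0}^∞ p(n) x^n` converges and `(∑ p(n) x^n) · ∏_{m=1}^∞ (1 - x^m) = 1`;
equivalently `∑_{n=0}^∞ p(n) x^n = ∏_{m=1}^∞ 1/(1 - x^m)`. -/
theorem euler_partition_generating_function (x : ℂ) (hx : ‖x‖ < 1) :
    Summable (fun n : ℕ => (Fintype.card (Nat.Partition n) : ℂ) * x ^ n) ∧
    (∑' n : ℕ, (Fintype.card (Nat.Partition n) : ℂ) * x ^ n) *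
        ∏' m : ℕ, (1 - x ^ (m + 1)) = 1 ∧
    ∑' n : ℕ, (Fintype.card (Nat.Partition n) : ℂ) * x ^ n =
      ∏' m : ℕ, (1 - x ^ (m + 1))⁻¹ := by
  set r : ℝ := ‖x‖ with hr_def
  have hr0 : 0 ≤ r := norm_nonneg x
  have hnorm : ∀ n : ℕ, ‖(Fintype.card (Nat.Partition n) : ℂ) * x ^ n‖
      = (Fintype.card (Nat.Partition n) : ℝ) * r ^ n := fun n => by
    rw [norm_mul, norm_pow, Complex.norm_natCast]
  -- summability
  have hsum : Summable (fun n : ℕ => (Fintype.card (Nat.Partition n) : ℂ) * x ^ n) := by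
    apply Summable.of_norm
    simpa only [hnorm] using summable_p hr0 hx
  refine ⟨hsum, ?_⟩
  -- nonvanishing of factors
  have hlt : ∀ i : ℕ, ‖x ^ (i+1)‖ < 1 := fun i => by
    rw [norm_pow]; exact pow_lt_one₀ hr0 hx (Nat.succ_ne_zero i)
  have hne : ∀ i : ℕ, (1 : ℂ) - x ^ (i+1) ≠ 0 := fun i => by
    intro h
    have h1 : x ^ (i+1) = 1 := by linear_combination -h
    have h2 := hlt i
    rw [h1] at h2
    simp at h2
  -- summability of logs
  have hlog : Summable (fun i : ℕ => Complex.log (1 - x ^ (i+1))) := by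
    apply Summable.of_norm_bounded
      (g := fun i => (r * (1-r)⁻¹ / 2 + 1) * r ^ (i+1))
    · exact ((summable_geometric_of_lt_one hr0 hx).mul_left
        ((r * (1-r)⁻¹ / 2 + 1) * r)).congr (fun i => by rw [pow_succ]; ring)
    · intro i
      have hb := Complex.norm_log_one_add_le (z := -x ^ (i+1)) (by rw [norm_neg]; exact hlt i)
      rw [← sub_eq_add_neg] at hb
      refine hb.trans ?_
      rw [norm_neg, norm_pow]
      have hrp : r ^ (i+1) ≤ r := by
        calc r ^ (i+1) ≤ r ^ 1 := pow_le_pow_of_le_one hr0 hx.le (by omega)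
        _ = r := pow_one r
      have h1r : (0:ℝ) < 1 - r := by linarith
      have hinv : (1 - r ^ (i+1))⁻¹ ≤ (1 - r)⁻¹ := by
        apply inv_anti₀ h1r
        linarith
      have hsq : (r ^ (i+1))^2 ≤ r * r ^ (i+1) := by
        rw [sq]
        apply mul_le_mul_of_nonneg_right hrp (by positivity)
      have hp0 : (0:ℝ) ≤ r ^ (i+1) := by positivity
      have t1 : (r ^ (i+1))^2 * (1 - r ^ (i+1))⁻¹ / 2 ≤ (r * r^(i+1)) * (1-r)⁻¹ / 2 := by
        apply div_le_div_of_nonneg_right _ (by norm_num)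
        apply mul_le_mul hsq hinv (inv_nonneg.2 (by nlinarith)) (by positivity)
      nlinarith [t1]
  -- multipliability
  have M1 : Multipliable (fun i : ℕ => 1 - x ^ (i+1)) :=
    Complex.multipliable_of_summable_log hlog
  have hArg : ∀ i : ℕ, (1 - x ^ (i+1)).arg ≠ Real.pi := fun i => by
    rw [Ne, Complex.arg_eq_pi_iff]
    rintro ⟨h1, -⟩
    have h2 : |(x ^ (i+1)).re| ≤ ‖x ^ (i+1)‖ := Complex.abs_re_le_norm _
    have h3 := hlt i
    have h4 : (1 - x^(i+1)).re = 1 - (x^(i+1)).re := by simp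
    rw [h4] at h1
    have h5 := (abs_le.1 h2).2
    linarith
  have hlog2 : Summable (fun i : ℕ => Complex.log ((1 - x ^ (i+1))⁻¹)) := by
    refine hlog.neg.congr fun i => ?_
    rw [Complex.log_inv _ (hArg i)]
  have M2 : Multipliable (fun i : ℕ => (1 - x ^ (i+1))⁻¹) :=
    Complex.multipliable_of_summable_log hlog2
  -- limits
  have hT1 : Tendsto (fun N => ∏ i ∈ range N, (1 - x ^ (i+1))⁻¹) atTop
      (nhds (∏' m : ℕ, (1 - x ^ (m+1))⁻¹)) := M2.hasProd.tendsto_prod_nat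
  have hT2 : Tendsto (fun N => ∑' n : ℕ, (qq N n : ℂ) * x ^ n) atTop
      (nhds (∑' n : ℕ, (Fintype.card (Nat.Partition n) : ℂ) * x ^ n)) := by
    apply tendsto_tsum_of_dominated_convergence (summable_p hr0 hx)
    · intro k
      have heq : (fun N => (qq N k : ℂ) * x ^ k) =ᶠ[atTop]
          (fun _ => (Fintype.card (Nat.Partition k) : ℂ) * x ^ k) := by
        filter_upwards [eventually_ge_atTop k] with N hN
        rw [qq_eq N k hN]
      exact Tendsto.congr' heq.symm tendsto_const_nhds
    · filter_upwards with N k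
      rw [norm_mul, norm_pow, Complex.norm_natCast]
      exact mul_le_mul_of_nonneg_right (by exact_mod_cast qq_le N k) (by positivity)
  have hVal : (fun N => ∑' n : ℕ, (qq N n : ℂ) * x ^ n)
      = fun N => ∏ i ∈ range N, (1 - x ^ (i+1))⁻¹ :=
    funext fun N => (partial_sum_prod hx N).2
  rw [hVal] at hT2
  have hEq : ∑' n : ℕ, (Fintype.card (Nat.Partition n) : ℂ) * x ^ n
      = ∏' m : ℕ, (1 - x ^ (m+1))⁻¹ := tendsto_nhds_unique hT2 hT1
  refine ⟨?_, hEq⟩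
  rw [hEq, ← Multipliable.tprod_mul M2 M1]
  have hone : (fun i : ℕ => (1 - x ^ (i+1))⁻¹ * (1 - x ^ (i+1))) = fun _ => (1:ℂ) :=
    funext fun i => inv_mul_cancel₀ (hne i)
  rw [hone, tprod_one]
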